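/- Under the same assumptions as the quadratic identity (invertible Jacobi operator with decaying Green's function), for all n, k ∈ ℤ: G(n+1,k)/G(n+1,n) = G(n,k)/G(n,n) · [1 + (a_n G(n,n+1))^{-1} 𝟙_{k>n}], provided G(n,n), G(n+1,n), and a_n G(n,n+1) are nonzero. -/

import Mathlib

/-- For an invertible Jacobi operator with decaying symmetric Green's function `G`,
for all `n, k`: `G(n+1,k)/G(n+1,n) = G(n,k)/G(n,n) · [1 + (a_n G(n,n+1))⁻¹ 𝟙_{k>n}]`,
provided `G(n,n)`, `G(n+1,n)`, and `a_n G(n,n+1)` are nonzero. -/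
theorem jacobi_ratio_identity (κ : ℝ) (a b : ℤ → ℝ) (ha : ∀ n, 0 < a n)
    (L R : lp (fun _ : ℤ => ℝ) 2 →L[ℝ] lp (fun _ : ℤ => ℝ) 2)
    (hL : ∀ (f : lp (fun _ : ℤ => ℝ) 2) (j : ℤ),
      L f j = Real.cosh κ * f j - (a j * f (j + 1) + a (j - 1) * f (j - 1) + b j * f j))
    (hR1 : R * L = 1) (hR2 : L * R = 1)
    (G : ℤ → ℤ → ℝ) (hG : ∀ i j : ℤ, G i j = R (lp.single 2 j 1) i)
    (hsymm : ∀ i j : ℤ, G i j = G j i)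
    (hdecay : ∀ n : ℤ, Filter.Tendsto (fun m => G n m) Filter.cofinite (nhds 0)) :
    ∀ n k : ℤ, G n n ≠ 0 → G (n + 1) n ≠ 0 → a n * G n (n + 1) ≠ 0 →
      G (n + 1) k / G (n + 1) n =
        G n k / G n n * (1 + (a n * G n (n + 1))⁻¹ * (if n < k then (1 : ℝ) else 0)) := by
  intro n k hGnn hGn1n hanG
  have han : a n ≠ 0 := (ha n).ne'
  have hc : (a n)⁻¹ * a n = 1 := inv_mul_cancel₀ han
  set g : ℤ → lp (fun _ : ℤ => ℝ) 2 := fun m => R (lp.single 2 m 1) with hgdef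
  have hGg : ∀ i j : ℤ, G i j = g j i := hG
  -- the difference equation for columns of G
  have star : ∀ (m j : ℤ), Real.cosh κ * G j m -
      (a j * G (j + 1) m + a (j - 1) * G (j - 1) m + b j * G j m) =
      (if j = m then (1 : ℝ) else 0) := by
    intro m j
    have h1 : L (g m) = lp.single 2 m 1 := by
      have := congrFun (congrArg (fun T : lp (fun _ : ℤ => ℝ) 2 →L[ℝ] lp (fun _ : ℤ => ℝ) 2 =>
        (T : lp (fun _ : ℤ => ℝ) 2 → lp (fun _ : ℤ => ℝ) 2)) hR2) (lp.single 2 m 1)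
      simpa [ContinuousLinearMap.mul_apply] using this
    have h2 := hL (g m) j
    rw [h1] at h2
    simp only [← hGg] at h2
    rw [← h2, lp.single_apply]
    by_cases hj : j = m <;> simp [hj]
  -- truncated column
  set vf : ℤ → ℝ := fun j => (if n < j then (1 : ℝ) else 0) * G j n with hvf
  have hmem : Memℓp vf 2 := by
    apply memℓp_gen
    have hsum : Summable fun j : ℤ => ‖(g n : ∀ _ : ℤ, ℝ) j‖ ^ (2 : ENNReal).toReal :=
      (lp.memℓp (g n)).summable (by norm_num)
    apply Summable.of_nonneg_of_le (fun j => by positivity) _ hsum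
    intro j
    have hle : ‖vf j‖ ≤ ‖(g n : ∀ _ : ℤ, ℝ) j‖ := by
      simp only [hvf, ← hGg, Real.norm_eq_abs]
      by_cases h : n < j <;> simp [h, abs_nonneg]
    exact Real.rpow_le_rpow (norm_nonneg _) hle ENNReal.toReal_nonneg
  set v : lp (fun _ : ℤ => ℝ) 2 := ⟨vf, hmem⟩ with hvdef
  set f : lp (fun _ : ℤ => ℝ) 2 :=
    G n n • g (n + 1) - G (n + 1) n • g n - (a n)⁻¹ • v with hfdef
  have hfk : ∀ j : ℤ, (f : ∀ _ : ℤ, ℝ) j =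
      G n n * G j (n + 1) - G (n + 1) n * G j n -
        (a n)⁻¹ * ((if n < j then (1 : ℝ) else 0) * G j n) := by
    intro j
    have hv : (v : ∀ _ : ℤ, ℝ) j = (if n < j then (1 : ℝ) else 0) * G j n := rfl
    simp only [hfdef, lp.coeFn_sub, lp.coeFn_smul, Pi.sub_apply, Pi.smul_apply, smul_eq_mul,
      ← hGg, hv]
  have hLf : ∀ j : ℤ, (L f : ∀ _ : ℤ, ℝ) j = 0 := by
    intro j
    rw [hL f j, hfk j, hfk (j + 1), hfk (j - 1)]
    rcases lt_trichotomy j n with h | h | h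
    · have s1 := star (n + 1) j
      rw [if_neg (by omega)] at s1
      have s2 := star n j
      rw [if_neg (by omega)] at s2
      rw [if_neg (by omega), if_neg (by omega), if_neg (by omega)]
      linear_combination G n n * s1 - G (n + 1) n * s2
    · subst h
      have s1 := star (j + 1) j
      rw [if_neg (by omega)] at s1
      have s2 := star j j
      rw [if_pos rfl] at s2
      rw [if_neg (by omega), if_pos (by omega), if_neg (by omega)]
      linear_combination G j j * s1 - G (j + 1) j * s2 + G (j + 1) j * hc
    · rcases eq_or_lt_of_le (Int.add_one_le_iff.mpr h) with h1 | h1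
      · subst h1
        have s1 := star (n + 1) (n + 1)
        rw [if_pos rfl] at s1
        have s2 := star n (n + 1)
        rw [if_neg (by omega)] at s2
        rw [if_pos (by omega), if_pos (by omega), if_neg (by omega)]
        have e1 : (n + 1 - 1 : ℤ) = n := by ring
        rw [e1] at s1 s2 ⊢
        linear_combination G n n * s1 - G (n + 1) n * s2 - (a n)⁻¹ * s2 - G n n * hc
      · have s1 := star (n + 1) j
        rw [if_neg (by omega)] at s1
        have s2 := star n j
        rw [if_neg (by omega)] at s2
        rw [if_pos (by omega), if_pos (by omega), if_pos (by omega)]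
        linear_combination G n n * s1 - G (n + 1) n * s2 - (a n)⁻¹ * s2
  have hLf0 : L f = 0 := lp.ext (funext hLf)
  have hf0 : f = 0 := by
    have := congrFun (congrArg (fun T : lp (fun _ : ℤ => ℝ) 2 →L[ℝ] lp (fun _ : ℤ => ℝ) 2 =>
      (T : lp (fun _ : ℤ => ℝ) 2 → lp (fun _ : ℤ => ℝ) 2)) hR1) f
    simp only [ContinuousLinearMap.mul_apply, ContinuousLinearMap.one_apply] at this
    rw [← this, hLf0, map_zero]
  have key : G n n * G k (n + 1) - G (n + 1) n * G k n -
      (a n)⁻¹ * ((if n < k then (1 : ℝ) else 0) * G k n) = 0 := by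
    rw [← hfk k, hf0]
    simp
  have hs1 : G (n + 1) k = G k (n + 1) := hsymm _ _
  have hs2 : G n k = G k n := hsymm _ _
  have hs3 : G n (n + 1) = G (n + 1) n := hsymm _ _
  have hG' : G n (n + 1) ≠ 0 := fun h => hanG (by rw [h, mul_zero])
  rw [hs1, hs2, hs3]
  rw [hs3] at hG'
  field_simp
  by_cases hk : n < k
  · rw [if_pos hk] at key ⊢
    linear_combination a n * key + G k n * hc
  · rw [if_neg hk] at key ⊢
    linear_combination a n * key
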